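/- Smooth-fit principle: let g, V : (0,∞) → ℝ with either V ≥ g everywhere and V(x₀) = g(x₀) with V concave near x₀, or V ≤ g everywhere and V(x₀) = g(x₀) with V convex near x₀. If g is differentiable at x₀, then V is differentiable at x₀ and V'(x₀) = g'(x₀). -/

import Mathlib

open Set Filter Topology

private lemma smooth_fit_convex (g V : ℝ → ℝ) (x₀ a b d : ℝ) (hx : x₀ ∈ Ioo a b)
    (heq : V x₀ = g x₀) (hg : HasDerivAt g d x₀) (hcv : ConvexOn ℝ (Ioo a b) V)
    (hle : ∀ x ∈ Ioo a b, V x ≤ g x) : HasDerivAt V d x₀ := by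
  rw [hasDerivAt_iff_tendsto_slope] at hg ⊢
  have hrw : ∀ f : ℝ → ℝ, slope f x₀ = fun y => (f y - f x₀) / (y - x₀) := by
    intro f; funext y; rw [slope_def_field]
  rw [hrw] at hg ⊢
  set s : ℝ → ℝ := fun x => (V x - V x₀) / (x - x₀) with hs
  set t : ℝ → ℝ := fun x => (g x - g x₀) / (x - x₀) with ht
  set r : ℝ → ℝ := fun x => 2 * x₀ - x with hr
  have hrt : Tendsto r (𝓝[≠] x₀) (𝓝[≠] x₀) := by
    apply tendsto_nhdsWithin_of_tendsto_nhds_of_eventually_within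
    · have h1 : Tendsto r (𝓝 x₀) (𝓝 (2 * x₀ - x₀)) :=
        (continuous_const.sub continuous_id).tendsto _
      have h2 : (2:ℝ) * x₀ - x₀ = x₀ := by ring
      rw [h2] at h1
      exact h1.mono_left nhdsWithin_le_nhds
    · filter_upwards [self_mem_nhdsWithin] with x hx
      simp only [r, mem_compl_iff, mem_singleton_iff] at hx ⊢
      intro hcon; apply hx; linarith
  have hgr : Tendsto (fun x => t (r x)) (𝓝[≠] x₀) (𝓝 d) := hg.comp hrt
  -- slope comparisons with g
  have key_gt : ∀ y ∈ Ioo a b, x₀ < y → s y ≤ t y := by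
    intro y hy hxy
    have h1 : V y - V x₀ ≤ g y - g x₀ := by have := hle y hy; linarith
    exact div_le_div_of_nonneg_right h1 (by linarith) |>.trans_eq rfl
  have key_lt : ∀ y ∈ Ioo a b, y < x₀ → t y ≤ s y := by
    intro y hy hxy
    have h1 : V y - V x₀ ≤ g y - g x₀ := by have := hle y hy; linarith
    simp only [s, t]
    rw [div_le_div_right_of_neg (by linarith)]
    exact h1
  -- convexity slope monotonicity, rephrased
  have key_cv : ∀ u ∈ Ioo a b, ∀ v ∈ Ioo a b, u < x₀ → x₀ < v → s u ≤ s v := by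
    intro u hu v hv hu' hv'
    have h1 := hcv.slope_mono_adjacent hu hv hu' hv'
    have h2 : (V x₀ - V u) / (x₀ - u) = (V u - V x₀) / (u - x₀) := by
      rw [← neg_sub (V u), ← neg_sub u, neg_div_neg_eq]
    rw [h2] at h1
    exact h1
  -- symmetric interval
  obtain ⟨hax, hxb⟩ := hx
  set δ : ℝ := min (x₀ - a) (b - x₀) with hδ
  have hδ0 : 0 < δ := lt_min (by linarith) (by linarith)
  have hmem : ∀ x ∈ Ioo (x₀ - δ) (x₀ + δ), x ∈ Ioo a b := by
    intro x hx
    have h1 : δ ≤ x₀ - a := min_le_left _ _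
    have h2 : δ ≤ b - x₀ := min_le_right _ _
    exact ⟨by cases hx; linarith, by cases hx; linarith⟩
  have hev : ∀ᶠ x in 𝓝[≠] x₀, x ∈ Ioo (x₀ - δ) (x₀ + δ) ∧ x ≠ x₀ := by
    filter_upwards [inter_mem_nhdsWithin {x₀}ᶜ (Ioo_mem_nhds (show x₀ - δ < x₀ by linarith) (show x₀ < x₀ + δ by linarith))]
      with x hx
    exact ⟨hx.2, hx.1⟩
  have hmin : Tendsto (fun x => min (t x) (t (r x))) (𝓝[≠] x₀) (𝓝 d) := by
    simpa using hg.min hgr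
  have hmax : Tendsto (fun x => max (t x) (t (r x))) (𝓝[≠] x₀) (𝓝 d) := by
    simpa using hg.max hgr
  refine tendsto_of_tendsto_of_tendsto_of_le_of_le' hmin hmax ?_ ?_
  · filter_upwards [hev] with x ⟨hxI, hxne⟩
    have hxab := hmem x hxI
    have hrI : r x ∈ Ioo (x₀ - δ) (x₀ + δ) := by
      simp only [r, mem_Ioo] at hxI ⊢
      constructor <;> [linarith [hxI.2]; linarith [hxI.1]]
    have hrab := hmem _ hrI
    rcases lt_or_gt_of_ne hxne with hlt | hgt
    · exact le_trans (min_le_left _ _) (key_lt x hxab hlt)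
    · have hrlt : r x < x₀ := by simp only [r]; linarith
      exact le_trans (min_le_right _ _)
        (le_trans (key_lt _ hrab hrlt) (key_cv _ hrab _ hxab hrlt hgt))
  · filter_upwards [hev] with x ⟨hxI, hxne⟩
    have hxab := hmem x hxI
    have hrI : r x ∈ Ioo (x₀ - δ) (x₀ + δ) := by
      simp only [r, mem_Ioo] at hxI ⊢
      constructor <;> [linarith [hxI.2]; linarith [hxI.1]]
    have hrab := hmem _ hrI
    rcases lt_or_gt_of_ne hxne with hlt | hgt
    · have hrgt : x₀ < r x := by simp only [r]; linarith
      exact le_trans (le_trans (key_cv _ hxab _ hrab hlt hrgt) (key_gt _ hrab hrgt))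
        (le_max_right _ _)
    · exact le_trans (key_gt x hxab hgt) (le_max_left _ _)

/-- Smooth-fit principle: if `V` touches `g` at `x₀` from above (with `V` concave near `x₀`)
or from below (with `V` convex near `x₀`), and `g` is differentiable at `x₀`, then `V` is
differentiable at `x₀` with `V'(x₀) = g'(x₀)`. -/
theorem smooth_fit_principle (g V : ℝ → ℝ) (x₀ : ℝ) (hx₀ : x₀ ∈ Ioi (0:ℝ))
    (heq : V x₀ = g x₀) (d : ℝ) (hg : HasDerivAt g d x₀)
    (h : (∃ a b : ℝ, x₀ ∈ Ioo a b ∧ Ioo a b ⊆ Ioi 0 ∧ ConcaveOn ℝ (Ioo a b) V ∧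
            ∀ x ∈ Ioi (0:ℝ), g x ≤ V x) ∨
         (∃ a b : ℝ, x₀ ∈ Ioo a b ∧ Ioo a b ⊆ Ioi 0 ∧ ConvexOn ℝ (Ioo a b) V ∧
            ∀ x ∈ Ioi (0:ℝ), V x ≤ g x)) :
    HasDerivAt V d x₀ := by
  rcases h with ⟨a, b, hx, hsub, hcc, hge⟩ | ⟨a, b, hx, hsub, hcv, hle⟩
  · have := smooth_fit_convex (fun x => -g x) (fun x => -V x) x₀ a b (-d) hx
      (by simp [heq]) hg.neg hcc.neg
      (fun x hxab => neg_le_neg (hge x (hsub hxab)))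
    have h2 := this.neg
    have e : (-fun x => -V x) = V := by ext x; simp
    rw [e, neg_neg] at h2
    exact h2
  · exact smooth_fit_convex g V x₀ a b d hx heq hg hcv
      (fun x hxab => hle x (hsub hxab))
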